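/- (Sufficient condition for local stability of a BP fixed point.) Assume the matrix A is irreducible and the set of triples (i,a,j) with i ≠ j in a is nonempty. Let λ₁ be the spectral radius (Perron eigenvalue) of A and μ₂ = max over all such triples of √(μ₂^{(iaj)}). If λ₁·μ₂ < 1, then every complex eigenvalue of the matrix J̃ has modulus strictly less than 1; i.e., the spectral radius of J̃ is strictly less than 1, so the BP fixed point associated with the beliefs b is locally stable for the normalized BP scheme. -/

import Mathlib

open Finset

variable {V F : Type*} [Fintype V] [DecidableEq V] [Fintype F] [DecidableEq F]

/-- Configurations on the factor `a`: tuples `x_a ∈ {1,…,q}^a`. -/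
abbrev Config (S : F → Finset V) (q : ℕ) (a : F) := {i : V // i ∈ S a} → Fin q

/-- The conditional-belief matrix `B^{(iaj)}`, with entries
`B^{(iaj)}_{kl} = (1/b_i(k)) Σ_{x_a : x_i = k, x_j = l} b_a(x_a)`. -/
noncomputable def Bmat (S : F → Finset V) {q : ℕ} (bv : V → Fin q → ℝ)
    (bf : ∀ a : F, Config S q a → ℝ) (a : F) (i j : V) :
    Matrix (Fin q) (Fin q) ℝ :=
  Matrix.of fun k l => (1 / bv i k) *
    ∑ y ∈ univ.filter (fun y : Config S q a =>
        ∀ v : {v : V // v ∈ S a}, (v.1 = i → y v = k) ∧ (v.1 = j → y v = l)),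
      bf a y

/-- The combined stochastic kernel `K^{(iaj)} = B^{(iaj)} B^{(jai)}`. -/
noncomputable def Kmat (S : F → Finset V) {q : ℕ} (bv : V → Fin q → ℝ)
    (bf : ∀ a : F, Config S q a → ℝ) (a : F) (i j : V) :
    Matrix (Fin q) (Fin q) ℝ :=
  Bmat S bv bf a i j * Bmat S bv bf a j i

/-- `μ₂^{(iaj)}`: the second eigenvalue of `K^{(iaj)}`, as the supremum of the Rayleigh
quotient over nonzero vectors with zero `b_i`-mean. -/
noncomputable def mu2 (S : F → Finset V) {q : ℕ} (bv : V → Fin q → ℝ)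
    (bf : ∀ a : F, Config S q a → ℝ) (a : F) (i j : V) : ℝ :=
  sSup {r : ℝ | ∃ x : Fin q → ℝ, x ≠ 0 ∧ (∑ k, x k * bv i k) = 0 ∧
    r = (∑ k, ∑ l, x k * x l * Kmat S bv bf a i j k l * bv i k) /
        (∑ k, x k ^ 2 * bv i k)}

/-- The 0-1 adjacency matrix `A` of the oriented line graph `L(G)`:
`A_{(a,i),(a',j)} = 1` iff `j ∈ a ∩ a'`, `j ≠ i` and `a' ≠ a`. -/
noncomputable def Amat (S : F → Finset V) : Matrix (F × V) (F × V) ℝ :=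
  Matrix.of fun e e' =>
    if e'.2 ∈ S e.1 ∧ e'.2 ∈ S e'.1 ∧ e'.2 ≠ e.2 ∧ e'.1 ≠ e.1 then 1 else 0

/-- Directed paths of length `n` from `e` to `e'` in the oriented line graph. -/
def pathSet (S : F → Finset V) (n : ℕ) (e e' : F × V) :
    Finset (Fin (n + 1) → F × V) :=
  univ.filter (fun γ => γ 0 = e ∧ γ (Fin.last n) = e' ∧
    ∀ t : Fin n,
      (γ t.succ).2 ∈ S (γ t.castSucc).1 ∧ (γ t.succ).2 ∈ S (γ t.succ).1 ∧
      (γ t.succ).2 ≠ (γ t.castSucc).2 ∧ (γ t.succ).1 ≠ (γ t.castSucc).1)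

/-- The stochastic kernel of a path: `B^γ = B^{(i_0 a_0 i_1)} ⋯ B^{(i_{n-1} a_{n-1} i_n)}`. -/
noncomputable def pathKernel (S : F → Finset V) {q : ℕ} (bv : V → Fin q → ℝ)
    (bf : ∀ a : F, Config S q a → ℝ) {n : ℕ} (γ : Fin (n + 1) → F × V) :
    Matrix (Fin q) (Fin q) ℝ :=
  (List.ofFn fun t : Fin n =>
    Bmat S bv bf (γ t.castSucc).1 (γ t.castSucc).2 (γ t.succ).2).prod

/-- `μ₂ = max_{(iaj)} √(μ₂^{(iaj)})`, the maximum over all triples `(i,a,j)` with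
`i ≠ j` both in `a`. -/
noncomputable def mu2max (S : F → Finset V) {q : ℕ} (bv : V → Fin q → ℝ)
    (bf : ∀ a : F, Config S q a → ℝ) : ℝ :=
  sSup {r : ℝ | ∃ (a : F) (i j : V), i ∈ S a ∧ j ∈ S a ∧ i ≠ j ∧
    r = Real.sqrt (mu2 S bv bf a i j)}

/-- The Jacobian `J̃` of the message-normalized BP update at the fixed point with beliefs
`(b_i, b_a)` (for `φ_i = b_i`, `ψ_a = b_a/∏_{i∈a} b_i`, messages ≡ 1):
`J̃_{(a,i,k),(a',j,l)} = (B^{(iaj)}_{kl} − (1/q) Σ_x B^{(iaj)}_{xl}) A_{(a,i),(a',j)}`. -/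
noncomputable def Jtilde (S : F → Finset V) {q : ℕ} (bv : V → Fin q → ℝ)
    (bf : ∀ a : F, Config S q a → ℝ) :
    Matrix ((F × V) × Fin q) ((F × V) × Fin q) ℝ :=
  Matrix.of fun p p' =>
    (Bmat S bv bf p.1.1 p.1.2 p'.1.2 p.2 p'.2
        - (1 / (q : ℝ)) * ∑ x : Fin q, Bmat S bv bf p.1.1 p.1.2 p'.1.2 x p'.2) *
      Amat S p.1 p'.1

/-- `μ` is a (complex) eigenvalue of the real square matrix `M`. -/
def IsEigenvalue {n : Type*} [Fintype n] [DecidableEq n]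
    (M : Matrix n n ℝ) (μ : ℂ) : Prop :=
  ∃ v : n → ℂ, v ≠ 0 ∧ (M.map (fun t : ℝ => (t : ℂ))).mulVec v = μ • v

/-- The spectral radius of a real square matrix: the supremum of the moduli of its
complex eigenvalues. -/
noncomputable def specRad {n : Type*} [Fintype n] [DecidableEq n]
    (M : Matrix n n ℝ) : ℝ :=
  sSup {r : ℝ | ∃ μ : ℂ, IsEigenvalue M μ ∧ r = ‖μ‖}


/- ######## auxiliary material ######## -/
set_option linter.unusedSectionVars false
set_option linter.unusedVariables false
set_option maxHeartbeats 1000000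

attribute [local instance] Matrix.linftyOpNormedRing Matrix.linftyOpNormedAlgebra

section SpectralAux
variable {n : Type*} [Fintype n] [DecidableEq n]

theorem eig_iff_spectrum (M : Matrix n n ℝ) (μ : ℂ) :
    IsEigenvalue M μ ↔ μ ∈ spectrum ℂ (M.map (fun t : ℝ => (t : ℂ))) := by
  rw [spectrum.mem_iff, Matrix.isUnit_iff_isUnit_det, isUnit_iff_ne_zero, ne_eq, not_not,
    ← Matrix.exists_mulVec_eq_zero_iff]
  constructor
  · rintro ⟨v, hv, hMv⟩
    exact ⟨v, hv, by simp [Algebra.algebraMap_eq_smul_one, Matrix.sub_mulVec,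
      Matrix.smul_mulVec, Matrix.one_mulVec, hMv]⟩
  · rintro ⟨v, hv, hMv⟩
    refine ⟨v, hv, ?_⟩
    have := hMv
    rw [Algebra.algebraMap_eq_smul_one, Matrix.sub_mulVec, Matrix.smul_mulVec,
      Matrix.one_mulVec, sub_eq_zero] at this
    exact this.symm

theorem abs_le_of_eig (M : Matrix n n ℝ) (μ : ℂ) (h : IsEigenvalue M μ) :
    ‖μ‖ ≤ ‖M.map (fun t : ℝ => (t : ℂ))‖ := by
  obtain ⟨v, hv, hMv⟩ := h
  have h1 : ‖μ • v‖ ≤ ‖M.map (fun t : ℝ => (t : ℂ))‖ * ‖v‖ := by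
    rw [← hMv]; exact Matrix.linfty_opNorm_mulVec _ _
  rw [norm_smul] at h1
  have hv' : 0 < ‖v‖ := norm_pos_iff.mpr hv
  exact le_of_mul_le_mul_right h1 hv'

theorem bdd_radset (M : Matrix n n ℝ) :
    BddAbove {r : ℝ | ∃ μ : ℂ, IsEigenvalue M μ ∧ r = ‖μ‖} := by
  refine ⟨‖M.map (fun t : ℝ => (t : ℂ))‖, ?_⟩
  rintro r ⟨μ, hμ, rfl⟩
  exact abs_le_of_eig M μ hμ

theorem abs_le_specRad (M : Matrix n n ℝ) (μ : ℂ) (h : IsEigenvalue M μ) :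
    ‖μ‖ ≤ specRad M :=
  le_csSup (bdd_radset M) ⟨μ, h, rfl⟩

theorem specRad_nonneg [Nonempty n] (M : Matrix n n ℝ) : 0 ≤ specRad M := by
  obtain ⟨c, hc⟩ := Module.End.exists_eigenvalue
    (Matrix.mulVecLin (M.map (fun t : ℝ => (t : ℂ))))
  obtain ⟨v, hv⟩ := hc.exists_hasEigenvector
  have : IsEigenvalue M c :=
    ⟨v, hv.2, by simpa [Matrix.mulVecLin] using (Module.End.mem_eigenspace_iff.mp hv.1)⟩
  exact le_trans (norm_nonneg c) (abs_le_specRad M c this)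

theorem spectralRadius_le (M : Matrix n n ℝ) [Nonempty n] :
    spectralRadius ℂ (M.map (fun t : ℝ => (t : ℂ))) ≤ ENNReal.ofReal (specRad M) := by
  refine iSup₂_le fun k hk => ?_
  rw [← enorm_eq_nnnorm, ← ofReal_norm]
  exact ENNReal.ofReal_le_ofReal
    (by simpa using abs_le_specRad M k ((eig_iff_spectrum M k).mpr hk))

/-- Gelfand consequence: entries of `M^m` are eventually `≤ r^m` for `r > specRad M`. -/
theorem entries_pow_le [Nonempty n] (M : Matrix n n ℝ) {r : ℝ} (hr : specRad M < r) :
    ∃ N : ℕ, ∀ m ≥ N, 1 ≤ m → ∀ i j, (M ^ m) i j ≤ r ^ m := by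
  have h0 : (0:ℝ) ≤ specRad M := specRad_nonneg M
  set M' := M.map (fun t : ℝ => (t : ℂ)) with hM'
  have hlt : spectralRadius ℂ M' < ENNReal.ofReal r :=
    lt_of_le_of_lt (spectralRadius_le M)
      ((ENNReal.ofReal_lt_ofReal_iff (lt_of_le_of_lt h0 hr)).mpr hr)
  have htend := spectrum.pow_nnnorm_pow_one_div_tendsto_nhds_spectralRadius M'
  have hev : ∀ᶠ m : ℕ in Filter.atTop,
      ((‖M' ^ m‖₊ : ENNReal) ^ (1 / (m:ℝ))) < ENNReal.ofReal r :=
    htend.eventually_lt_const hlt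
  obtain ⟨N, hN⟩ := Filter.eventually_atTop.mp hev
  refine ⟨N, fun m hm hm1 i j => ?_⟩
  have hx := hN m hm
  have hmne : m ≠ 0 := by omega
  -- raise both sides to the m-th power
  have h2 : (‖M' ^ m‖₊ : ENNReal) < ENNReal.ofReal r ^ m := by
    have := ENNReal.pow_lt_pow_left hmne hx
    rwa [← ENNReal.rpow_natCast (((‖M' ^ m‖₊ : ENNReal)) ^ (1 / (m:ℝ))) m,
      ← ENNReal.rpow_mul, one_div, inv_mul_cancel₀ (by exact_mod_cast hmne : (m:ℝ) ≠ 0),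
      ENNReal.rpow_one] at this
  have h3 : ‖M' ^ m‖ < r ^ m := by
    rw [← ENNReal.ofReal_pow (le_trans h0 hr.le)] at h2
    rw [← enorm_eq_nnnorm, ← ofReal_norm] at h2
    exact (ENNReal.ofReal_lt_ofReal_iff_of_nonneg (norm_nonneg _)).mp h2
  -- entries
  have hpow : M' ^ m = (M ^ m).map (fun t : ℝ => (t : ℂ)) := by
    have : M' = Complex.ofRealHom.mapMatrix M := rfl
    rw [this, ← map_pow]; rfl
  have hentry : |(M ^ m) i j| ≤ ‖M' ^ m‖ := by
    rw [hpow]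
    have : ‖((M ^ m).map (fun t : ℝ => (t : ℂ))) i j‖ ≤ ‖(M ^ m).map (fun t : ℝ => (t : ℂ))‖ := by
      rw [Matrix.linfty_opNorm_def]
      calc ‖((M ^ m).map (fun t : ℝ => (t : ℂ))) i j‖
          ≤ ((∑ j', ‖((M ^ m).map (fun t : ℝ => (t : ℂ))) i j'‖₊ : NNReal) : ℝ) := by
            exact_mod_cast Finset.single_le_sum (f := fun j' => ‖((M ^ m).map (fun t : ℝ => (t : ℂ))) i j'‖₊) (fun _ _ => zero_le) (mem_univ j)
        _ ≤ _ := by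
            exact_mod_cast Finset.le_sup (f := fun i => ∑ j', ‖((M ^ m).map (fun t : ℝ => (t : ℂ))) i j'‖₊) (mem_univ i)
    simpa [Matrix.map_apply, Complex.norm_real] using this
  exact le_trans (le_abs_self _) (le_trans hentry h3.le)

end SpectralAux

section BeliefAux
variable {S : F → Finset V} {q : ℕ} {bv : V → Fin q → ℝ} {bf : ∀ a : F, Config S q a → ℝ}

/-- symmetric pair sum -/
noncomputable def Spair (S : F → Finset V) {q : ℕ}
    (bf : ∀ a : F, Config S q a → ℝ) (a : F) (i j : {v : V // v ∈ S a}) (k l : Fin q) : ℝ :=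
  ∑ y ∈ univ.filter (fun y : Config S q a => y i = k ∧ y j = l), bf a y

variable {S : F → Finset V} {q : ℕ} {bv : V → Fin q → ℝ} {bf : ∀ a : F, Config S q a → ℝ}

theorem Spair_symm (a : F) (i j : {v : V // v ∈ S a}) (k l : Fin q) :
    Spair S bf a i j k l = Spair S bf a j i l k := by
  unfold Spair
  congr 1
  ext y
  simp [and_comm]

theorem Spair_nonneg (hbf : ∀ a y, 0 < bf a y) (a : F) (i j : {v : V // v ∈ S a}) (k l : Fin q) :
    0 ≤ Spair S bf a i j k l :=
  Finset.sum_nonneg fun y _ => (hbf a y).le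

theorem Bmat_eq (a : F) (i j : {v : V // v ∈ S a}) (k l : Fin q) :
    Bmat S bv bf a i j k l = Spair S bf a i j k l / bv i.1 k := by
  unfold Bmat Spair
  rw [Matrix.of_apply, one_div, div_eq_inv_mul]
  congr 2
  ext y
  simp only [mem_filter, mem_univ, true_and]
  constructor
  · intro h
    exact ⟨(h i).1 rfl, (h j).2 rfl⟩
  · rintro ⟨h1, h2⟩ v
    constructor
    · intro hvi
      rwa [show v = i from Subtype.ext hvi]
    · intro hvj
      rwa [show v = j from Subtype.ext hvj]

theorem Spair_sum_right
    (hcompat : ∀ a i (hi : i ∈ S a) (k : Fin q),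
      ∑ y ∈ univ.filter (fun y : Config S q a => y ⟨i, hi⟩ = k), bf a y = bv i k)
    (a : F) (i j : {v : V // v ∈ S a}) (k : Fin q) :
    ∑ l, Spair S bf a i j k l = bv i.1 k := by
  have h := hcompat a i.1 i.2 k
  rw [Subtype.coe_eta] at h
  rw [← h]
  unfold Spair
  have hsplit : ∀ l, (univ.filter (fun y : Config S q a => y i = k ∧ y j = l)) =
      (univ.filter (fun y : Config S q a => y i = k)).filter (fun y => y j = l) := by
    intro l; rw [Finset.filter_filter]
  rw [Finset.sum_congr rfl (fun l _ => by rw [hsplit l, Finset.sum_filter])]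
  rw [Finset.sum_comm]
  refine Finset.sum_congr rfl fun y _ => ?_
  simp

theorem Spair_sum_left
    (hcompat : ∀ a i (hi : i ∈ S a) (k : Fin q),
      ∑ y ∈ univ.filter (fun y : Config S q a => y ⟨i, hi⟩ = k), bf a y = bv i k)
    (a : F) (i j : {v : V // v ∈ S a}) (l : Fin q) :
    ∑ k, Spair S bf a i j k l = bv j.1 l := by
  rw [Finset.sum_congr rfl (fun k _ => Spair_symm a i j k l)]
  exact Spair_sum_right hcompat a j i l

theorem bv_mul_Bmat (hbv : ∀ i x, 0 < bv i x)
    (a : F) (i j : {v : V // v ∈ S a}) (k l : Fin q) :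
    bv i.1 k * Bmat S bv bf a i j k l = Spair S bf a i j k l := by
  rw [Bmat_eq a i j, mul_div_cancel₀ _ (hbv i.1 k).ne']

theorem Bmat_row_sum (hbv : ∀ i x, 0 < bv i x)
    (hcompat : ∀ a i (hi : i ∈ S a) (k : Fin q),
      ∑ y ∈ univ.filter (fun y : Config S q a => y ⟨i, hi⟩ = k), bf a y = bv i k)
    (a : F) (i j : {v : V // v ∈ S a}) (k : Fin q) :
    ∑ l, Bmat S bv bf a i j k l = 1 := by
  rw [Finset.sum_congr rfl (fun l _ => Bmat_eq a i j k l), ← Finset.sum_div,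
    Spair_sum_right hcompat, div_self (hbv i.1 k).ne']

theorem Bmat_col_sum (hbv : ∀ i x, 0 < bv i x)
    (hcompat : ∀ a i (hi : i ∈ S a) (k : Fin q),
      ∑ y ∈ univ.filter (fun y : Config S q a => y ⟨i, hi⟩ = k), bf a y = bv i k)
    (a : F) (i j : {v : V // v ∈ S a}) (l : Fin q) :
    ∑ k, bv i.1 k * Bmat S bv bf a i j k l = bv j.1 l := by
  rw [Finset.sum_congr rfl (fun k _ => bv_mul_Bmat hbv a i j k l)]
  exact Spair_sum_left hcompat a i j l

theorem Bmat_nonneg (hbv : ∀ i x, 0 < bv i x) (hbf : ∀ a y, 0 < bf a y)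
    (a : F) (i j : {v : V // v ∈ S a}) (k l : Fin q) :
    0 ≤ Bmat S bv bf a i j k l := by
  rw [Bmat_eq a i j k l]
  exact div_nonneg (Spair_nonneg hbf a i j k l) (hbv i.1 k).le


/-- The key quadratic identity. -/
theorem quad_identity (hbv : ∀ i x, 0 < bv i x)
    (a : F) (i j : {v : V // v ∈ S a}) (x : Fin q → ℝ) :
    ∑ k, bv i.1 k * (∑ l, Bmat S bv bf a i j k l * x l) ^ 2
      = ∑ l, ∑ l', x l * x l' * Kmat S bv bf a ↑j ↑i l l' * bv j.1 l := by
  have hK : ∀ l l', Kmat S bv bf a ↑j ↑i l l' * bv j.1 l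
      = ∑ k, bv i.1 k * (Bmat S bv bf a i j k l * Bmat S bv bf a i j k l') := by
    intro l l'
    rw [Kmat, Matrix.mul_apply, Finset.sum_mul]
    refine Finset.sum_congr rfl fun k _ => ?_
    have h1 : bv j.1 l * Bmat S bv bf a j i l k = bv i.1 k * Bmat S bv bf a i j k l := by
      rw [bv_mul_Bmat hbv a j i l k, bv_mul_Bmat hbv a i j k l, Spair_symm]
    calc Bmat S bv bf a ↑j ↑i l k * Bmat S bv bf a ↑i ↑j k l' * bv j.1 l
        = (bv j.1 l * Bmat S bv bf a j i l k) * Bmat S bv bf a ↑i ↑j k l' := by ring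
      _ = (bv i.1 k * Bmat S bv bf a i j k l) * Bmat S bv bf a ↑i ↑j k l' := by rw [h1]
      _ = bv i.1 k * (Bmat S bv bf a ↑i ↑j k l * Bmat S bv bf a ↑i ↑j k l') := by ring
  calc ∑ k, bv i.1 k * (∑ l, Bmat S bv bf a i j k l * x l) ^ 2
      = ∑ k, ∑ l, ∑ l', x l * x l' * (bv i.1 k * (Bmat S bv bf a i j k l * Bmat S bv bf a i j k l')) := by
        refine Finset.sum_congr rfl fun k _ => ?_
        rw [sq, Finset.sum_mul_sum, Finset.mul_sum]
        refine Finset.sum_congr rfl fun l _ => ?_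
        rw [Finset.mul_sum]
        refine Finset.sum_congr rfl fun l' _ => ?_
        ring
    _ = ∑ l, ∑ l', ∑ k, x l * x l' * (bv i.1 k * (Bmat S bv bf a i j k l * Bmat S bv bf a i j k l')) := by
        rw [Finset.sum_comm]
        refine Finset.sum_congr rfl fun l _ => Finset.sum_comm
    _ = ∑ l, ∑ l', x l * x l' * Kmat S bv bf a ↑j ↑i l l' * bv j.1 l := by
        refine Finset.sum_congr rfl fun l _ => Finset.sum_congr rfl fun l' _ => ?_
        rw [mul_assoc, hK l l', Finset.mul_sum]

/-- Cauchy–Schwarz / stochasticity bound. -/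
theorem quad_le (hbv : ∀ i x, 0 < bv i x) (hbf : ∀ a y, 0 < bf a y)
    (hcompat : ∀ a i (hi : i ∈ S a) (k : Fin q),
      ∑ y ∈ univ.filter (fun y : Config S q a => y ⟨i, hi⟩ = k), bf a y = bv i k)
    (a : F) (i j : {v : V // v ∈ S a}) (x : Fin q → ℝ) :
    ∑ k, bv i.1 k * (∑ l, Bmat S bv bf a i j k l * x l) ^ 2
      ≤ ∑ l, x l ^ 2 * bv j.1 l := by
  have hstep : ∀ k, (∑ l, Bmat S bv bf a i j k l * x l) ^ 2
      ≤ ∑ l, Bmat S bv bf a i j k l * x l ^ 2 := by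
    intro k
    have hcs := Finset.sum_mul_sq_le_sq_mul_sq Finset.univ
      (fun l => Real.sqrt (Bmat S bv bf a i j k l))
      (fun l => Real.sqrt (Bmat S bv bf a i j k l) * x l)
    have h1 : ∀ l, Real.sqrt (Bmat S bv bf a i j k l) *
        (Real.sqrt (Bmat S bv bf a i j k l) * x l) = Bmat S bv bf a i j k l * x l := by
      intro l
      rw [← mul_assoc, Real.mul_self_sqrt (Bmat_nonneg hbv hbf a i j k l)]
    have h2 : ∀ l, Real.sqrt (Bmat S bv bf a i j k l) ^ 2 = Bmat S bv bf a i j k l :=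
      fun l => Real.sq_sqrt (Bmat_nonneg hbv hbf a i j k l)
    have h3 : ∀ l, (Real.sqrt (Bmat S bv bf a i j k l) * x l) ^ 2
        = Bmat S bv bf a i j k l * x l ^ 2 := by
      intro l; rw [mul_pow, h2]
    rw [Finset.sum_congr rfl (fun l _ => h1 l), Finset.sum_congr rfl (fun l _ => h2 l),
      Finset.sum_congr rfl (fun l _ => h3 l), Bmat_row_sum hbv hcompat a i j k, one_mul] at hcs
    exact hcs
  calc ∑ k, bv i.1 k * (∑ l, Bmat S bv bf a i j k l * x l) ^ 2
      ≤ ∑ k, bv i.1 k * ∑ l, Bmat S bv bf a i j k l * x l ^ 2 :=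
        Finset.sum_le_sum fun k _ => mul_le_mul_of_nonneg_left (hstep k) (hbv i.1 k).le
    _ = ∑ l, x l ^ 2 * ∑ k, bv i.1 k * Bmat S bv bf a i j k l := by
        simp_rw [Finset.mul_sum]
        rw [Finset.sum_comm]
        exact Finset.sum_congr rfl fun l _ => Finset.sum_congr rfl fun k _ => by ring
    _ = ∑ l, x l ^ 2 * bv j.1 l := by
        refine Finset.sum_congr rfl fun l _ => ?_
        rw [Bmat_col_sum hbv hcompat a i j l]

theorem den_pos (hbv : ∀ i x, 0 < bv i x) (i : V) {x : Fin q → ℝ} (hx : x ≠ 0) :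
    0 < ∑ k, x k ^ 2 * bv i k := by
  obtain ⟨k0, hk0⟩ : ∃ k, x k ≠ 0 := by
    by_contra h
    push_neg at h
    exact hx (funext fun k => h k)
  exact Finset.sum_pos' (fun k _ => mul_nonneg (sq_nonneg _) (hbv i k).le)
    ⟨k0, mem_univ k0, mul_pos (by positivity) (hbv i k0)⟩

theorem mu2_elem_mem (hbv : ∀ i x, 0 < bv i x) (hbf : ∀ a y, 0 < bf a y)
    (hcompat : ∀ a i (hi : i ∈ S a) (k : Fin q),
      ∑ y ∈ univ.filter (fun y : Config S q a => y ⟨i, hi⟩ = k), bf a y = bv i k)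
    {a : F} (i j : {v : V // v ∈ S a}) {r : ℝ}
    (hr : r ∈ {r : ℝ | ∃ x : Fin q → ℝ, x ≠ 0 ∧ (∑ k, x k * bv i.1 k) = 0 ∧
      r = (∑ k, ∑ l, x k * x l * Kmat S bv bf a i.1 j.1 k l * bv i.1 k) /
          (∑ k, x k ^ 2 * bv i.1 k)}) : 0 ≤ r ∧ r ≤ 1 := by
  obtain ⟨x, hx0, _, rfl⟩ := hr
  have hD : 0 < ∑ k, x k ^ 2 * bv i.1 k := den_pos hbv i.1 hx0
  have hN : (∑ k, ∑ l, x k * x l * Kmat S bv bf a i.1 j.1 k l * bv i.1 k)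
      = ∑ k, bv j.1 k * (∑ l, Bmat S bv bf a j.1 i.1 k l * x l) ^ 2 :=
    (quad_identity hbv a j i x).symm
  constructor
  · apply div_nonneg _ hD.le
    rw [hN]
    exact Finset.sum_nonneg fun k _ => mul_nonneg (hbv j.1 k).le (sq_nonneg _)
  · rw [div_le_one hD, hN]
    exact quad_le hbv hbf hcompat a j i x

theorem mu2_bddAbove (hbv : ∀ i x, 0 < bv i x) (hbf : ∀ a y, 0 < bf a y)
    (hcompat : ∀ a i (hi : i ∈ S a) (k : Fin q),
      ∑ y ∈ univ.filter (fun y : Config S q a => y ⟨i, hi⟩ = k), bf a y = bv i k)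
    {a : F} (i j : {v : V // v ∈ S a}) :
    BddAbove {r : ℝ | ∃ x : Fin q → ℝ, x ≠ 0 ∧ (∑ k, x k * bv i.1 k) = 0 ∧
      r = (∑ k, ∑ l, x k * x l * Kmat S bv bf a i.1 j.1 k l * bv i.1 k) /
          (∑ k, x k ^ 2 * bv i.1 k)} :=
  ⟨1, fun r hr => (mu2_elem_mem hbv hbf hcompat i j hr).2⟩

/-- a nonzero mean-zero witness vector (needs `2 ≤ q`). -/
theorem mu2_witness (hbv : ∀ i x, 0 < bv i x) (hq : 2 ≤ q) (i : V) :
    ∃ x : Fin q → ℝ, x ≠ 0 ∧ (∑ k, x k * bv i k) = 0 := by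
  have h0 : (0 : ℕ) < q := by omega
  have h1 : (1 : ℕ) < q := by omega
  set k0 : Fin q := ⟨0, h0⟩
  set k1 : Fin q := ⟨1, h1⟩
  have hk01 : k0 ≠ k1 := by simp [k0, k1, Fin.ext_iff]
  refine ⟨fun k => (if k = k0 then bv i k1 else 0) + (if k = k1 then -(bv i k0) else 0), ?_, ?_⟩
  · intro h
    have := congrFun h k0
    simp [hk01, Pi.zero_apply] at this
    exact (hbv i k1).ne' this
  · have : ∀ k : Fin q, ((if k = k0 then bv i k1 else 0) + (if k = k1 then -(bv i k0) else 0)) * bv i k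
        = (if k = k0 then bv i k1 * bv i k else 0) + (if k = k1 then -(bv i k0) * bv i k else 0) := by
      intro k
      split_ifs <;> ring
    rw [Finset.sum_congr rfl fun k _ => this k, Finset.sum_add_distrib,
      Finset.sum_ite_eq' univ k0, Finset.sum_ite_eq' univ k1]
    simp
    ring

theorem mu2_nonneg (hbv : ∀ i x, 0 < bv i x) (hbf : ∀ a y, 0 < bf a y)
    (hcompat : ∀ a i (hi : i ∈ S a) (k : Fin q),
      ∑ y ∈ univ.filter (fun y : Config S q a => y ⟨i, hi⟩ = k), bf a y = bv i k)
    (hq : 2 ≤ q) {a : F} (i j : {v : V // v ∈ S a}) :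
    0 ≤ mu2 S bv bf a i.1 j.1 := by
  obtain ⟨x, hx0, hxm⟩ := mu2_witness hbv hq i.1
  set r := (∑ k, ∑ l, x k * x l * Kmat S bv bf a i.1 j.1 k l * bv i.1 k) /
      (∑ k, x k ^ 2 * bv i.1 k) with hrdef
  have hmem : r ∈ {r : ℝ | ∃ x : Fin q → ℝ, x ≠ 0 ∧ (∑ k, x k * bv i.1 k) = 0 ∧
      r = (∑ k, ∑ l, x k * x l * Kmat S bv bf a i.1 j.1 k l * bv i.1 k) /
          (∑ k, x k ^ 2 * bv i.1 k)} := ⟨x, hx0, hxm, rfl⟩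
  exact le_trans (mu2_elem_mem hbv hbf hcompat i j hmem).1
    (le_csSup (mu2_bddAbove hbv hbf hcompat i j) hmem)

theorem mu2_le_one (hbv : ∀ i x, 0 < bv i x) (hbf : ∀ a y, 0 < bf a y)
    (hcompat : ∀ a i (hi : i ∈ S a) (k : Fin q),
      ∑ y ∈ univ.filter (fun y : Config S q a => y ⟨i, hi⟩ = k), bf a y = bv i k)
    (hq : 2 ≤ q) {a : F} (i j : {v : V // v ∈ S a}) :
    mu2 S bv bf a i.1 j.1 ≤ 1 := by
  obtain ⟨x, hx0, hxm⟩ := mu2_witness hbv hq i.1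
  refine csSup_le ⟨_, ⟨x, hx0, hxm, rfl⟩⟩ fun r hr => (mu2_elem_mem hbv hbf hcompat i j hr).2

/-- main Rayleigh bound: for `x` with zero `bv j`-mean. -/
theorem rayleigh_le_mu2 (hbv : ∀ i x, 0 < bv i x) (hbf : ∀ a y, 0 < bf a y)
    (hcompat : ∀ a i (hi : i ∈ S a) (k : Fin q),
      ∑ y ∈ univ.filter (fun y : Config S q a => y ⟨i, hi⟩ = k), bf a y = bv i k)
    {a : F} (i j : {v : V // v ∈ S a}) {x : Fin q → ℝ}
    (hx : (∑ l, x l * bv j.1 l) = 0) :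
    ∑ k, bv i.1 k * (∑ l, Bmat S bv bf a i.1 j.1 k l * x l) ^ 2
      ≤ mu2 S bv bf a j.1 i.1 * ∑ l, x l ^ 2 * bv j.1 l := by
  by_cases hx0 : x = 0
  · subst hx0
    simp
  · have hD : 0 < ∑ l, x l ^ 2 * bv j.1 l := den_pos hbv j.1 hx0
    have hN : ∑ k, bv i.1 k * (∑ l, Bmat S bv bf a i.1 j.1 k l * x l) ^ 2
        = ∑ k, ∑ l, x k * x l * Kmat S bv bf a j.1 i.1 k l * bv j.1 k :=
      quad_identity hbv a i j x
    have hmem : (∑ k, ∑ l, x k * x l * Kmat S bv bf a j.1 i.1 k l * bv j.1 k) /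
        (∑ k, x k ^ 2 * bv j.1 k) ∈
        {r : ℝ | ∃ x : Fin q → ℝ, x ≠ 0 ∧ (∑ k, x k * bv j.1 k) = 0 ∧
          r = (∑ k, ∑ l, x k * x l * Kmat S bv bf a j.1 i.1 k l * bv j.1 k) /
              (∑ k, x k ^ 2 * bv j.1 k)} := ⟨x, hx0, hx, rfl⟩
    have hle := le_csSup (mu2_bddAbove hbv hbf hcompat j i) hmem
    rw [hN]
    calc (∑ k, ∑ l, x k * x l * Kmat S bv bf a j.1 i.1 k l * bv j.1 k)
        = ((∑ k, ∑ l, x k * x l * Kmat S bv bf a j.1 i.1 k l * bv j.1 k) /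
            (∑ k, x k ^ 2 * bv j.1 k)) * (∑ k, x k ^ 2 * bv j.1 k) := by
          field_simp
      _ ≤ mu2 S bv bf a j.1 i.1 * ∑ l, x l ^ 2 * bv j.1 l :=
          mul_le_mul_of_nonneg_right hle hD.le


theorem mu2max_bddAbove (hbv : ∀ i x, 0 < bv i x) (hbf : ∀ a y, 0 < bf a y)
    (hcompat : ∀ a i (hi : i ∈ S a) (k : Fin q),
      ∑ y ∈ univ.filter (fun y : Config S q a => y ⟨i, hi⟩ = k), bf a y = bv i k)
    (hq : 2 ≤ q) :
    BddAbove {r : ℝ | ∃ (a : F) (i j : V), i ∈ S a ∧ j ∈ S a ∧ i ≠ j ∧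
      r = Real.sqrt (mu2 S bv bf a i j)} := by
  refine ⟨1, ?_⟩
  rintro r ⟨a, i, j, hi, hj, hij, rfl⟩
  have := mu2_le_one hbv hbf hcompat hq (a := a) ⟨i, hi⟩ ⟨j, hj⟩
  calc Real.sqrt (mu2 S bv bf a i j) ≤ Real.sqrt 1 := Real.sqrt_le_sqrt this
    _ = 1 := Real.sqrt_one

theorem sqrt_mu2_le_mu2max (hbv : ∀ i x, 0 < bv i x) (hbf : ∀ a y, 0 < bf a y)
    (hcompat : ∀ a i (hi : i ∈ S a) (k : Fin q),
      ∑ y ∈ univ.filter (fun y : Config S q a => y ⟨i, hi⟩ = k), bf a y = bv i k)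
    (hq : 2 ≤ q) {a : F} {i j : V} (hi : i ∈ S a) (hj : j ∈ S a) (hij : i ≠ j) :
    Real.sqrt (mu2 S bv bf a i j) ≤ mu2max S bv bf :=
  le_csSup (mu2max_bddAbove hbv hbf hcompat hq) ⟨a, i, j, hi, hj, hij, rfl⟩

theorem mu2max_nonneg (hbv : ∀ i x, 0 < bv i x) (hbf : ∀ a y, 0 < bf a y)
    (hcompat : ∀ a i (hi : i ∈ S a) (k : Fin q),
      ∑ y ∈ univ.filter (fun y : Config S q a => y ⟨i, hi⟩ = k), bf a y = bv i k)
    (hq : 2 ≤ q) (htriple : ∃ (a : F) (i j : V), i ∈ S a ∧ j ∈ S a ∧ i ≠ j) :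
    0 ≤ mu2max S bv bf := by
  obtain ⟨a, i, j, hi, hj, hij⟩ := htriple
  exact le_trans (Real.sqrt_nonneg _) (sqrt_mu2_le_mu2max hbv hbf hcompat hq hi hj hij)

/-- mu2 ≤ mu2max² -/
theorem mu2_le_sq_mu2max (hbv : ∀ i x, 0 < bv i x) (hbf : ∀ a y, 0 < bf a y)
    (hcompat : ∀ a i (hi : i ∈ S a) (k : Fin q),
      ∑ y ∈ univ.filter (fun y : Config S q a => y ⟨i, hi⟩ = k), bf a y = bv i k)
    (hq : 2 ≤ q) {a : F} {i j : V} (hi : i ∈ S a) (hj : j ∈ S a) (hij : i ≠ j) :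
    mu2 S bv bf a i j ≤ mu2max S bv bf ^ 2 := by
  have h0 : 0 ≤ mu2 S bv bf a i j := mu2_nonneg hbv hbf hcompat hq (a := a) ⟨i, hi⟩ ⟨j, hj⟩
  calc mu2 S bv bf a i j = Real.sqrt (mu2 S bv bf a i j) ^ 2 := (Real.sq_sqrt h0).symm
    _ ≤ mu2max S bv bf ^ 2 :=
        pow_le_pow_left₀ (Real.sqrt_nonneg _) (sqrt_mu2_le_mu2max hbv hbf hcompat hq hi hj hij) 2

/-- The complex step bound. -/
theorem complex_step (hbv : ∀ i x, 0 < bv i x) (hbf : ∀ a y, 0 < bf a y)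
    (hcompat : ∀ a i (hi : i ∈ S a) (k : Fin q),
      ∑ y ∈ univ.filter (fun y : Config S q a => y ⟨i, hi⟩ = k), bf a y = bv i k)
    (hq : 2 ≤ q) {a : F} {i j : V} (hi : i ∈ S a) (hj : j ∈ S a) (hij : i ≠ j)
    {z : Fin q → ℂ} (hz : (∑ l, z l * (bv j l : ℂ)) = 0) :
    ∑ k, bv i k * ‖∑ l, (Bmat S bv bf a i j k l : ℂ) * z l‖ ^ 2
      ≤ mu2max S bv bf ^ 2 * ∑ l, bv j l * ‖z l‖ ^ 2 := by
  set x : Fin q → ℝ := fun l => (z l).re with hxdef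
  set y : Fin q → ℝ := fun l => (z l).im with hydef
  have hxre : (∑ l, x l * bv j l) = 0 := by
    have := congrArg Complex.re hz
    simpa [Complex.re_sum, hxdef] using this
  have hyim : (∑ l, y l * bv j l) = 0 := by
    have := congrArg Complex.im hz
    simpa [Complex.im_sum, hydef] using this
  have hre : ∀ k, (∑ l, (Bmat S bv bf a i j k l : ℂ) * z l).re
      = ∑ l, Bmat S bv bf a i j k l * x l := by
    intro k
    rw [Complex.re_sum]
    exact Finset.sum_congr rfl fun l _ => by simp [Complex.mul_re, hxdef]
  have him : ∀ k, (∑ l, (Bmat S bv bf a i j k l : ℂ) * z l).im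
      = ∑ l, Bmat S bv bf a i j k l * y l := by
    intro k
    rw [Complex.im_sum]
    exact Finset.sum_congr rfl fun l _ => by simp [Complex.mul_im, hydef]
  have hnormsq : ∀ w : ℂ, ‖w‖ ^ 2 = w.re ^ 2 + w.im ^ 2 := by
    intro w
    rw [Complex.sq_norm, Complex.normSq_apply]
    ring
  have hmu : mu2 S bv bf a j i ≤ mu2max S bv bf ^ 2 :=
    mu2_le_sq_mu2max hbv hbf hcompat hq hj hi (Ne.symm hij)
  have hmu0 : 0 ≤ mu2 S bv bf a j i := mu2_nonneg hbv hbf hcompat hq (a := a) ⟨j, hj⟩ ⟨i, hi⟩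
  have hbx := rayleigh_le_mu2 hbv hbf hcompat (a := a) (i := ⟨i, hi⟩) (j := ⟨j, hj⟩) hxre
  have hby := rayleigh_le_mu2 hbv hbf hcompat (a := a) (i := ⟨i, hi⟩) (j := ⟨j, hj⟩) hyim
  have hDx : 0 ≤ ∑ l, x l ^ 2 * bv j l :=
    Finset.sum_nonneg fun l _ => mul_nonneg (sq_nonneg _) (hbv j l).le
  have hDy : 0 ≤ ∑ l, y l ^ 2 * bv j l :=
    Finset.sum_nonneg fun l _ => mul_nonneg (sq_nonneg _) (hbv j l).le
  calc ∑ k, bv i k * ‖∑ l, (Bmat S bv bf a i j k l : ℂ) * z l‖ ^ 2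
      = (∑ k, bv i k * (∑ l, Bmat S bv bf a i j k l * x l) ^ 2)
        + (∑ k, bv i k * (∑ l, Bmat S bv bf a i j k l * y l) ^ 2) := by
        rw [← Finset.sum_add_distrib]
        refine Finset.sum_congr rfl fun k _ => ?_
        rw [hnormsq, hre k, him k]
        ring
    _ ≤ mu2 S bv bf a j i * (∑ l, x l ^ 2 * bv j l)
        + mu2 S bv bf a j i * (∑ l, y l ^ 2 * bv j l) := add_le_add hbx hby
    _ ≤ mu2max S bv bf ^ 2 * (∑ l, x l ^ 2 * bv j l)
        + mu2max S bv bf ^ 2 * (∑ l, y l ^ 2 * bv j l) :=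
        add_le_add (mul_le_mul_of_nonneg_right hmu hDx) (mul_le_mul_of_nonneg_right hmu hDy)
    _ = mu2max S bv bf ^ 2 * ∑ l, bv j l * ‖z l‖ ^ 2 := by
        rw [← mul_add, ← Finset.sum_add_distrib]
        congr 1
        refine Finset.sum_congr rfl fun l _ => ?_
        rw [hnormsq]
        simp only [hxdef, hydef]
        ring

theorem aux_sw {q : ℕ} (A' Y : ℂ) (bw X : Fin q → ℂ) :
    ∑ k, A' * (X k - Y) * bw k = A' * ((∑ k, bw k * X k) - Y * ∑ k, bw k) := by
  simp only [Finset.mul_sum, mul_sub, Finset.sum_sub_distrib, sub_mul]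
  congr 1 <;> exact Finset.sum_congr rfl fun k _ => by ring

end BeliefAux

/-- Sufficient condition for local stability of a BP fixed point: if `λ₁ μ₂ < 1`, where
`λ₁` is the Perron (spectral radius) eigenvalue of `A` and `μ₂ = max √(μ₂^{(iaj)})`, then
every complex eigenvalue of the Jacobian `J̃` has modulus strictly less than `1`. -/
theorem bp_fixed_point_locally_stable
    (q : ℕ) (hq : 2 ≤ q) (S : F → Finset V) (hcard : ∀ a, 2 ≤ (S a).card)
    (bv : V → Fin q → ℝ) (bf : ∀ a : F, Config S q a → ℝ)
    (hbv : ∀ i x, 0 < bv i x) (hbf : ∀ a y, 0 < bf a y)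
    (hsumv : ∀ i, ∑ x, bv i x = 1)
    (hsumf : ∀ a, ∑ y : Config S q a, bf a y = 1)
    (hcompat : ∀ a i (hi : i ∈ S a) (k : Fin q),
      ∑ y ∈ univ.filter (fun y : Config S q a => y ⟨i, hi⟩ = k), bf a y = bv i k)
    (htriple : ∃ (a : F) (i j : V), i ∈ S a ∧ j ∈ S a ∧ i ≠ j)
    (hirr : ∀ e e' : F × V, e.2 ∈ S e.1 → e'.2 ∈ S e'.1 →
      ∃ n : ℕ, 0 < n ∧ 0 < (Amat S ^ n) e e')
    (hcond : specRad (Amat S) * mu2max S bv bf < 1) :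
    ∀ μ : ℂ, IsEigenvalue (Jtilde S bv bf) μ → ‖μ‖ < 1 := by
  classical
  intro μ hμ
  by_contra habs
  push_neg at habs
  obtain ⟨v, hv0, heig⟩ := hμ
  obtain ⟨a0, i0, j0, hi00, hj00, hij00⟩ := htriple
  haveI : Nonempty F := ⟨a0⟩
  haveI : Nonempty V := ⟨i0⟩
  have hμ1 : 1 ≤ ‖μ‖ := habs
  have hμne : μ ≠ 0 := by
    intro h
    rw [h] at hμ1
    simp at hμ1
    linarith
  have hqC : (q : ℂ) ≠ 0 := Nat.cast_ne_zero.mpr (by omega)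
  set μb := mu2max S bv bf with hμbdef
  have hμb0 : 0 ≤ μb := mu2max_nonneg hbv hbf hcompat hq ⟨a0, i0, j0, hi00, hj00, hij00⟩
  -- mean-zero decomposition of the eigenvector blocks
  set c : F × V → ℂ := fun e => ∑ l, v (e, l) * (bv e.2 l : ℂ) with hcdef
  set w : F × V → Fin q → ℂ := fun e k => v (e, k) - c e with hwdef
  have hsumvC : ∀ i : V, (∑ x, (bv i x : ℂ)) = 1 := by
    intro i
    exact_mod_cast hsumv i
  have hwmean : ∀ e : F × V, (∑ l, w e l * (bv e.2 l : ℂ)) = 0 := by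
    intro e
    have h1 : ∑ l, w e l * (bv e.2 l : ℂ)
        = (∑ l, v (e, l) * (bv e.2 l : ℂ)) - c e * ∑ l, (bv e.2 l : ℂ) := by
      rw [Finset.mul_sum, ← Finset.sum_sub_distrib]
      exact Finset.sum_congr rfl fun l _ => by simp only [hwdef]; ring
    rw [h1, hsumvC, mul_one, hcdef]
    exact sub_self _
  -- pointwise eigen-equation
  have heigp : ∀ (e : F × V) (k : Fin q),
      (∑ e' : F × V, ∑ l : Fin q,
        (((Bmat S bv bf e.1 e.2 e'.2 k l
            - 1 / (q : ℝ) * ∑ x : Fin q, Bmat S bv bf e.1 e.2 e'.2 x l)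
          * Amat S e e' : ℝ) : ℂ) * v (e', l)) = μ * v (e, k) := by
    intro e k
    have h := congrFun heig (e, k)
    simp only [Matrix.mulVec, dotProduct, Matrix.map_apply, Jtilde,
      Matrix.of_apply, Pi.smul_apply, smul_eq_mul] at h
    rw [← h]
    exact (Fintype.sum_prod_type (fun p' : (F × V) × Fin q =>
      (((Bmat S bv bf e.1 e.2 p'.1.2 k p'.2
          - 1 / (q : ℝ) * ∑ x : Fin q, Bmat S bv bf e.1 e.2 p'.1.2 x p'.2)
        * Amat S e p'.1 : ℝ) : ℂ) * v p')).symm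
  have hA01 : ∀ e e' : F × V,
      Amat S e e' = (if e'.2 ∈ S e.1 ∧ e'.2 ∈ S e'.1 ∧ e'.2 ≠ e.2 ∧ e'.1 ≠ e.1 then 1 else 0) := by
    intro e e'
    simp [Amat]
  have hA0 : ∀ e e' : F × V, 0 ≤ Amat S e e' := by
    intro e e'
    rw [hA01]
    split <;> norm_num
  -- claim 1
  have claim1 : ∀ e : F × V, e.2 ∈ S e.1 → ∀ k : Fin q,
      μ * v (e, k) = ∑ e' : F × V, (Amat S e e' : ℂ) *
        ((∑ l, (Bmat S bv bf e.1 e.2 e'.2 k l : ℂ) * w e' l)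
          - (q : ℂ)⁻¹ * ∑ x : Fin q, ∑ l, (Bmat S bv bf e.1 e.2 e'.2 x l : ℂ) * w e' l) := by
    intro e he k
    rw [← heigp e k]
    refine Finset.sum_congr rfl fun e' _ => ?_
    have hterm : ∀ l, (((Bmat S bv bf e.1 e.2 e'.2 k l
          - 1 / (q : ℝ) * ∑ x : Fin q, Bmat S bv bf e.1 e.2 e'.2 x l)
        * Amat S e e' : ℝ) : ℂ) * v (e', l)
        = (Amat S e e' : ℂ) * (((Bmat S bv bf e.1 e.2 e'.2 k l : ℂ)
            - (q : ℂ)⁻¹ * ∑ x : Fin q, (Bmat S bv bf e.1 e.2 e'.2 x l : ℂ)) * v (e', l)) := by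
      intro l
      push_cast
      ring
    rw [Finset.sum_congr rfl fun l _ => hterm l, ← Finset.mul_sum]
    by_cases hA : e'.2 ∈ S e.1 ∧ e'.2 ∈ S e'.1 ∧ e'.2 ≠ e.2 ∧ e'.1 ≠ e.1
    swap
    · rw [hA01 e e', if_neg hA]
      norm_num
    · congr 1
      -- row sums are 1
      have hrow : ∀ x : Fin q, (∑ l, (Bmat S bv bf e.1 e.2 e'.2 x l : ℂ)) = 1 := by
        intro x
        exact_mod_cast Bmat_row_sum hbv hcompat e.1 ⟨e.2, he⟩ ⟨e'.2, hA.1⟩ x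
      have hcoef : (∑ l, ((Bmat S bv bf e.1 e.2 e'.2 k l : ℂ)
          - (q : ℂ)⁻¹ * ∑ x : Fin q, (Bmat S bv bf e.1 e.2 e'.2 x l : ℂ))) = 0 := by
        rw [Finset.sum_sub_distrib, hrow k, ← Finset.mul_sum, Finset.sum_comm,
          Finset.sum_congr rfl fun x _ => hrow x]
        simp [Finset.card_univ, inv_mul_cancel₀ hqC]
      have hvwc : ∀ l, v (e', l) = w e' l + c e' := by
        intro l
        simp only [hwdef]
        ring
      calc ∑ l, ((Bmat S bv bf e.1 e.2 e'.2 k l : ℂ)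
              - (q : ℂ)⁻¹ * ∑ x : Fin q, (Bmat S bv bf e.1 e.2 e'.2 x l : ℂ)) * v (e', l)
          = (∑ l, ((Bmat S bv bf e.1 e.2 e'.2 k l : ℂ)
              - (q : ℂ)⁻¹ * ∑ x : Fin q, (Bmat S bv bf e.1 e.2 e'.2 x l : ℂ)) * w e' l)
            + (∑ l, ((Bmat S bv bf e.1 e.2 e'.2 k l : ℂ)
              - (q : ℂ)⁻¹ * ∑ x : Fin q, (Bmat S bv bf e.1 e.2 e'.2 x l : ℂ))) * c e' := by
            rw [Finset.sum_mul, ← Finset.sum_add_distrib]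
            refine Finset.sum_congr rfl fun l _ => ?_
            rw [hvwc l]
            ring
        _ = ∑ l, ((Bmat S bv bf e.1 e.2 e'.2 k l : ℂ)
              - (q : ℂ)⁻¹ * ∑ x : Fin q, (Bmat S bv bf e.1 e.2 e'.2 x l : ℂ)) * w e' l := by
            rw [hcoef, zero_mul, add_zero]
        _ = (∑ l, (Bmat S bv bf e.1 e.2 e'.2 k l : ℂ) * w e' l)
            - (q : ℂ)⁻¹ * ∑ x : Fin q, ∑ l, (Bmat S bv bf e.1 e.2 e'.2 x l : ℂ) * w e' l := by
            have h4 : (q : ℂ)⁻¹ * ∑ x : Fin q, ∑ l, (Bmat S bv bf e.1 e.2 e'.2 x l : ℂ) * w e' l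
                = ∑ l, (q : ℂ)⁻¹ * ((∑ x : Fin q, (Bmat S bv bf e.1 e.2 e'.2 x l : ℂ)) * w e' l) := by
              rw [Finset.sum_comm, Finset.mul_sum]
              exact Finset.sum_congr rfl fun l _ => by rw [Finset.sum_mul]
            rw [h4, ← Finset.sum_sub_distrib]
            exact Finset.sum_congr rfl fun l _ => by ring
  -- claim 2
  have claim2 : ∀ e : F × V, e.2 ∈ S e.1 →
      μ * c e = ∑ e' : F × V, (Amat S e e' : ℂ) *
        (-(q : ℂ)⁻¹ * ∑ x : Fin q, ∑ l, (Bmat S bv bf e.1 e.2 e'.2 x l : ℂ) * w e' l) := by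
    intro e he
    have h1 : μ * c e = ∑ k, (μ * v (e, k)) * (bv e.2 k : ℂ) := by
      rw [hcdef, Finset.mul_sum]
      exact Finset.sum_congr rfl fun k _ => by ring
    rw [h1, Finset.sum_congr rfl fun k (_ : k ∈ univ) => by rw [claim1 e he k]]
    rw [Finset.sum_congr rfl fun k (_ : k ∈ univ) => Finset.sum_mul _ _ _, Finset.sum_comm]
    refine Finset.sum_congr rfl fun e' _ => ?_
    by_cases hA : e'.2 ∈ S e.1 ∧ e'.2 ∈ S e'.1 ∧ e'.2 ≠ e.2 ∧ e'.1 ≠ e.1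
    swap
    · rw [hA01 e e', if_neg hA]
      norm_num
    · -- weighted column sums (complexified)
      have hcol : ∀ l : Fin q, (∑ k, (bv e.2 k : ℂ) * (Bmat S bv bf e.1 e.2 e'.2 k l : ℂ))
          = (bv e'.2 l : ℂ) := by
        intro l
        exact_mod_cast Bmat_col_sum hbv hcompat e.1 ⟨e.2, he⟩ ⟨e'.2, hA.1⟩ l
      have hBw0 : (∑ k, (bv e.2 k : ℂ) * ∑ l, (Bmat S bv bf e.1 e.2 e'.2 k l : ℂ) * w e' l) = 0 := by
        have h2 : (∑ k, (bv e.2 k : ℂ) * ∑ l, (Bmat S bv bf e.1 e.2 e'.2 k l : ℂ) * w e' l)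
            = ∑ l, (∑ k, (bv e.2 k : ℂ) * (Bmat S bv bf e.1 e.2 e'.2 k l : ℂ)) * w e' l := by
          simp_rw [Finset.mul_sum]
          rw [Finset.sum_comm]
          refine Finset.sum_congr rfl fun l _ => ?_
          rw [Finset.sum_mul]
          exact Finset.sum_congr rfl fun k _ => by ring
        rw [h2, Finset.sum_congr rfl fun l (_ : l ∈ univ) => by rw [hcol l]]
        rw [← hwmean e']
        exact Finset.sum_congr rfl fun l _ => mul_comm _ _
      -- now compute the k-sum for this e'
      calc ∑ k, (Amat S e e' : ℂ) * ((∑ l, (Bmat S bv bf e.1 e.2 e'.2 k l : ℂ) * w e' l)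
              - (q : ℂ)⁻¹ * ∑ x : Fin q, ∑ l, (Bmat S bv bf e.1 e.2 e'.2 x l : ℂ) * w e' l)
            * (bv e.2 k : ℂ)
          = (Amat S e e' : ℂ) * ((∑ k, (bv e.2 k : ℂ)
              * ∑ l, (Bmat S bv bf e.1 e.2 e'.2 k l : ℂ) * w e' l)
            - (q : ℂ)⁻¹ * (∑ x : Fin q, ∑ l, (Bmat S bv bf e.1 e.2 e'.2 x l : ℂ) * w e' l)
              * ∑ k, (bv e.2 k : ℂ)) := by
            exact aux_sw (Amat S e e' : ℂ)
              ((q : ℂ)⁻¹ * ∑ x : Fin q, ∑ l, (Bmat S bv bf e.1 e.2 e'.2 x l : ℂ) * w e' l)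
              (fun k => (bv e.2 k : ℂ))
              (fun k => ∑ l, (Bmat S bv bf e.1 e.2 e'.2 k l : ℂ) * w e' l)
        _ = (Amat S e e' : ℂ)
            * (-(q : ℂ)⁻¹ * ∑ x : Fin q, ∑ l, (Bmat S bv bf e.1 e.2 e'.2 x l : ℂ) * w e' l) := by
            rw [hBw0, hsumvC, mul_one]
            ring
  -- claim 3
  have claim3 : ∀ e : F × V, e.2 ∈ S e.1 → ∀ k : Fin q,
      μ * w e k = ∑ e' : F × V, (Amat S e e' : ℂ) *
        ∑ l, (Bmat S bv bf e.1 e.2 e'.2 k l : ℂ) * w e' l := by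
    intro e he k
    have h0 : μ * w e k = μ * v (e, k) - μ * c e := by simp only [hwdef]; ring
    rw [h0, claim1 e he k, claim2 e he, ← Finset.sum_sub_distrib]
    exact Finset.sum_congr rfl fun e' _ => by ring
  -- the weighted ℓ² norm machinery
  let D : V → (Fin q → ℂ) →ₗ[ℂ] (Fin q → ℂ) := fun i =>
    { toFun := fun z k => (Real.sqrt (bv i k) : ℂ) * z k
      map_add' := by intros z z'; funext k; simp [mul_add]
      map_smul' := by intros m z; funext k; simp; ring }
  let T : V → ((Fin q → ℂ) →ₗ[ℂ] EuclideanSpace ℂ (Fin q)) := fun i =>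
    (WithLp.linearEquiv 2 ℂ (Fin q → ℂ)).symm.toLinearMap ∘ₗ D i
  have hTnorm : ∀ (i : V) (z : Fin q → ℂ),
      ‖T i z‖ = Real.sqrt (∑ k, bv i k * ‖z k‖ ^ 2) := by
    intro i z
    rw [EuclideanSpace.norm_eq]
    congr 1
    refine Finset.sum_congr rfl fun k _ => ?_
    have h1 : (T i z) k = (Real.sqrt (bv i k) : ℂ) * z k := rfl
    rw [h1, norm_mul, Complex.norm_real, Real.norm_eq_abs,
      abs_of_nonneg (Real.sqrt_nonneg _), mul_pow, Real.sq_sqrt (hbv i k).le]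
  set s : F × V → ℝ := fun e => if e.2 ∈ S e.1 then ‖T e.2 (w e)‖ else 0 with hsdef
  have hs0 : ∀ e, 0 ≤ s e := by
    intro e
    simp only [hsdef]
    split
    · exact norm_nonneg _
    · exact le_refl 0
  -- per-edge step bound
  have hstep : ∀ e : F × V, ‖μ‖ * s e ≤ μb * ∑ e', Amat S e e' * s e' := by
    intro e
    have hRHS0 : 0 ≤ ∑ e', Amat S e e' * s e' :=
      Finset.sum_nonneg fun e' _ => mul_nonneg (hA0 e e') (hs0 e')
    by_cases he : e.2 ∈ S e.1
    swap
    · have : s e = 0 := by simp only [hsdef]; rw [if_neg he]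
      rw [this, mul_zero]
      exact mul_nonneg hμb0 hRHS0
    · -- the vector identity
      have h1 : T e.2 (fun k => μ * w e k)
          = ∑ e', T e.2 (fun k => (Amat S e e' : ℂ)
              * ∑ l, (Bmat S bv bf e.1 e.2 e'.2 k l : ℂ) * w e' l) := by
        rw [← map_sum]
        congr 1
        funext k
        rw [Finset.sum_apply]
        exact claim3 e he k
      have h2 : (fun k => μ * w e k) = μ • w e := by
        funext k
        simp
      have h3 : ‖T e.2 (fun k => μ * w e k)‖ = ‖μ‖ * s e := by
        rw [h2, map_smul, norm_smul]
        simp only [hsdef]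
        rw [if_pos he]
      -- termwise bound
      have h4 : ∀ e' : F × V, ‖T e.2 (fun k => (Amat S e e' : ℂ)
            * ∑ l, (Bmat S bv bf e.1 e.2 e'.2 k l : ℂ) * w e' l)‖
          ≤ Amat S e e' * (μb * s e') := by
        intro e'
        have h5 : (fun k => (Amat S e e' : ℂ)
              * ∑ l, (Bmat S bv bf e.1 e.2 e'.2 k l : ℂ) * w e' l)
            = (Amat S e e' : ℂ) • (fun k => ∑ l, (Bmat S bv bf e.1 e.2 e'.2 k l : ℂ) * w e' l) := by
          funext k
          simp
        rw [h5, map_smul, norm_smul, Complex.norm_real, Real.norm_eq_abs,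
          abs_of_nonneg (hA0 e e')]
        by_cases hA : e'.2 ∈ S e.1 ∧ e'.2 ∈ S e'.1 ∧ e'.2 ≠ e.2 ∧ e'.1 ≠ e.1
        swap
        · rw [hA01 e e', if_neg hA]
          norm_num
        · refine mul_le_mul_of_nonneg_left ?_ (hA0 e e')
          -- key contraction bound
          have hse' : s e' = ‖T e'.2 (w e')‖ := by
            simp only [hsdef]
            rw [if_pos hA.2.1]
          have hnn1 : 0 ≤ ∑ k, bv e.2 k
              * ‖∑ l, (Bmat S bv bf e.1 e.2 e'.2 k l : ℂ) * w e' l‖ ^ 2 :=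
            Finset.sum_nonneg fun k _ => mul_nonneg (hbv _ _).le (sq_nonneg _)
          have hnn2 : 0 ≤ ∑ l, bv e'.2 l * ‖w e' l‖ ^ 2 :=
            Finset.sum_nonneg fun l _ => mul_nonneg (hbv _ _).le (sq_nonneg _)
          have hkey := complex_step hbv hbf hcompat hq (a := e.1) he hA.1
            (Ne.symm hA.2.2.1) (z := w e') (hwmean e')
          have hsq : ‖T e.2 (fun k => ∑ l, (Bmat S bv bf e.1 e.2 e'.2 k l : ℂ) * w e' l)‖ ^ 2
              ≤ (μb * s e') ^ 2 := by
            rw [hTnorm, Real.sq_sqrt hnn1, hse', hTnorm, mul_pow, Real.sq_sqrt hnn2]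
            exact hkey
          exact le_of_pow_le_pow_left₀ two_ne_zero
            (mul_nonneg hμb0 (hse' ▸ norm_nonneg _)) hsq
      calc ‖μ‖ * s e = ‖T e.2 (fun k => μ * w e k)‖ := h3.symm
        _ ≤ ∑ e', ‖T e.2 (fun k => (Amat S e e' : ℂ)
              * ∑ l, (Bmat S bv bf e.1 e.2 e'.2 k l : ℂ) * w e' l)‖ := by
            rw [h1]
            exact norm_sum_le _ _
        _ ≤ ∑ e', Amat S e e' * (μb * s e') := Finset.sum_le_sum fun e' _ => h4 e'
        _ = μb * ∑ e', Amat S e e' * s e' := by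
            rw [Finset.mul_sum]
            exact Finset.sum_congr rfl fun e' _ => by ring
  -- positivity of some entry of s
  have hsex : ∃ e0, 0 < s e0 := by
    by_contra hno
    push_neg at hno
    have hseq : ∀ e, s e = 0 := fun e => le_antisymm (hno e) (hs0 e)
    have hw0 : ∀ e : F × V, e.2 ∈ S e.1 → w e = 0 := by
      intro e he
      have h1 : ‖T e.2 (w e)‖ = 0 := by
        have := hseq e
        simp only [hsdef] at this
        rwa [if_pos he] at this
      rw [hTnorm] at h1
      have hnn : 0 ≤ ∑ k, bv e.2 k * ‖w e k‖ ^ 2 :=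
        Finset.sum_nonneg fun k _ => mul_nonneg (hbv _ _).le (sq_nonneg _)
      have h2 : (∑ k, bv e.2 k * ‖w e k‖ ^ 2) = 0 := by
        have := Real.sqrt_eq_zero hnn |>.mp h1
        exact this
      have h3 := (Finset.sum_eq_zero_iff_of_nonneg
        (fun k _ => mul_nonneg (hbv e.2 k).le (sq_nonneg _))).mp h2
      funext k
      have h4 := h3 k (mem_univ k)
      have h5 : ‖w e k‖ ^ 2 = 0 := by
        rcases mul_eq_zero.mp h4 with h | h
        · exact absurd h (hbv _ _).ne'
        · exact h
      have h6 : w e k = 0 := norm_eq_zero.mp (pow_eq_zero_iff two_ne_zero |>.mp h5)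
      simpa using h6
    have hv_valid : ∀ e : F × V, e.2 ∈ S e.1 → ∀ k, v (e, k) = 0 := by
      intro e he k
      have h := claim1 e he k
      have h0 : ∀ e' : F × V, e' ∈ (univ : Finset (F × V)) → (Amat S e e' : ℂ) *
          ((∑ l, (Bmat S bv bf e.1 e.2 e'.2 k l : ℂ) * w e' l)
            - (q : ℂ)⁻¹ * ∑ x : Fin q, ∑ l, (Bmat S bv bf e.1 e.2 e'.2 x l : ℂ) * w e' l) = 0 := by
        intro e' _
        by_cases hA : e'.2 ∈ S e.1 ∧ e'.2 ∈ S e'.1 ∧ e'.2 ≠ e.2 ∧ e'.1 ≠ e.1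
        · rw [hw0 e' hA.2.1]
          simp
        · rw [hA01 e e', if_neg hA]
          norm_num
      rw [Finset.sum_eq_zero h0] at h
      exact (mul_eq_zero.mp h).resolve_left hμne
    have hv_all : ∀ p : (F × V) × Fin q, v p = 0 := by
      intro p
      obtain ⟨e, k⟩ := p
      by_cases he : e.2 ∈ S e.1
      · exact hv_valid e he k
      · have h := heigp e k
        have h0 : ∀ e' : F × V, e' ∈ (univ : Finset (F × V)) →
            (∑ l : Fin q, (((Bmat S bv bf e.1 e.2 e'.2 k l
              - 1 / (q : ℝ) * ∑ x : Fin q, Bmat S bv bf e.1 e.2 e'.2 x l)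
            * Amat S e e' : ℝ) : ℂ) * v (e', l)) = 0 := by
          intro e' _
          refine Finset.sum_eq_zero fun l _ => ?_
          by_cases hA : e'.2 ∈ S e.1 ∧ e'.2 ∈ S e'.1 ∧ e'.2 ≠ e.2 ∧ e'.1 ≠ e.1
          · rw [hv_valid e' hA.2.1 l, mul_zero]
          · rw [hA01 e e', if_neg hA]
            norm_num
        rw [Finset.sum_eq_zero h0] at h
        exact ((mul_eq_zero.mp h.symm).resolve_left hμne)
    exact hv0 (funext hv_all)
  -- iteration
  have hiter : ∀ (n : ℕ) (e : F × V),
      ‖μ‖ ^ n * s e ≤ μb ^ n * ((Amat S ^ n).mulVec s e) := by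
    intro n
    induction n with
    | zero =>
      intro e
      simp [Matrix.one_mulVec]
    | succ n ih =>
      intro e
      calc ‖μ‖ ^ (n + 1) * s e
          = ‖μ‖ ^ n * (‖μ‖ * s e) := by ring
        _ ≤ ‖μ‖ ^ n * (μb * ∑ e', Amat S e e' * s e') :=
            mul_le_mul_of_nonneg_left (hstep e) (pow_nonneg (norm_nonneg μ) n)
        _ = μb * ∑ e', Amat S e e' * (‖μ‖ ^ n * s e') := by
            rw [Finset.mul_sum, Finset.mul_sum, Finset.mul_sum]
            refine Finset.sum_congr rfl fun e' _ => by ring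
        _ ≤ μb * ∑ e', Amat S e e' * (μb ^ n * ((Amat S ^ n).mulVec s e')) := by
            refine mul_le_mul_of_nonneg_left (Finset.sum_le_sum fun e' _ =>
              mul_le_mul_of_nonneg_left (ih e') (hA0 e e')) hμb0
        _ = μb ^ (n + 1) * ((Amat S ^ (n + 1)).mulVec s e) := by
            have hps : (Amat S ^ (n + 1)).mulVec s e
                = ∑ e', Amat S e e' * ((Amat S ^ n).mulVec s e') := by
              rw [pow_succ' (Amat S) n, ← Matrix.mulVec_mulVec]
              simp [Matrix.mulVec, dotProduct]
            rw [hps, Finset.mul_sum, Finset.mul_sum]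
            exact Finset.sum_congr rfl fun e' _ => by ring
  -- conclusion
  obtain ⟨e0, he0⟩ := hsex
  set Tm := ∑ e', s e' with hTm
  have hTpos : 0 < Tm := lt_of_lt_of_le he0 (Finset.single_le_sum (fun e' _ => hs0 e') (mem_univ e0))
  have hρ0 : 0 ≤ specRad (Amat S) := specRad_nonneg (Amat S)
  by_cases hμbz : μb = 0
  · have := hstep e0
    rw [hμbz, zero_mul] at this
    have : ‖μ‖ * s e0 ≤ 0 := this
    nlinarith
  · have hμbpos : 0 < μb := lt_of_le_of_ne hμb0 (Ne.symm hμbz)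
    have hρlt : specRad (Amat S) < 1 / μb := by
      rw [lt_div_iff₀ hμbpos]
      exact hcond
    set r := (specRad (Amat S) + 1 / μb) / 2 with hr
    have hρr : specRad (Amat S) < r := by
      rw [hr]
      linarith
    have hr0 : 0 ≤ r := le_trans hρ0 hρr.le
    have hμbr : μb * r < 1 := by
      have h2 : μb * specRad (Amat S) < 1 := by
        rw [mul_comm]
        exact hcond
      have h3 : μb * r = (μb * specRad (Amat S) + 1) / 2 := by
        rw [hr]
        field_simp
      rw [h3]
      linarith
    obtain ⟨N, hN⟩ := entries_pow_le (Amat S) hρr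
    have h01 : 0 ≤ μb * r := mul_nonneg hμb0 hr0
    obtain ⟨n1, hn1⟩ := exists_pow_lt_of_lt_one (div_pos he0 hTpos) hμbr
    set m := max n1 (max N 1) with hm
    have hmN : N ≤ m := le_trans (le_max_left N 1) (le_max_right n1 (max N 1))
    have hm1 : 1 ≤ m := le_trans (le_max_right N 1) (le_max_right n1 (max N 1))
    have hmn1 : n1 ≤ m := le_max_left _ _
    have hpowm : (μb * r) ^ m < s e0 / Tm :=
      lt_of_le_of_lt (pow_le_pow_of_le_one h01 hμbr.le hmn1) hn1
    have hchain : s e0 ≤ (μb * r) ^ m * Tm := by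
      calc s e0 = 1 * s e0 := (one_mul _).symm
        _ ≤ ‖μ‖ ^ m * s e0 :=
            mul_le_mul_of_nonneg_right (one_le_pow₀ hμ1) (hs0 e0)
        _ ≤ μb ^ m * ((Amat S ^ m).mulVec s e0) := hiter m e0
        _ = μb ^ m * ∑ e', (Amat S ^ m) e0 e' * s e' := rfl
        _ ≤ μb ^ m * ∑ e', r ^ m * s e' := by
            refine mul_le_mul_of_nonneg_left (Finset.sum_le_sum fun e' _ =>
              mul_le_mul_of_nonneg_right (hN m hmN hm1 e0 e') (hs0 e')) (pow_nonneg hμb0 m)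
        _ = (μb * r) ^ m * Tm := by
            rw [← Finset.mul_sum, mul_pow, hTm]
            ring
    have : (μb * r) ^ m * Tm < s e0 := by
      have := mul_lt_mul_of_pos_right hpowm hTpos
      rwa [div_mul_cancel₀ _ hTpos.ne'] at this
    linarith
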